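/- Let S(u) = Σ_{n≥0} (−1)^n u^{2n}/(4^n (2n+1)!) ∈ ℚ[[u]] be the Taylor series of sin(u/2)/(u/2), and for an integer c ≥ 1 let S(cu) denote the series obtained from S by rescaling u ↦ cu. Then for every integer m ≥ 1 the following identity holds in ℚ[[u]]: m!·S(mu)·S(u)^m = Σ_{a=1}^{m} Σ_{j=1}^{a} (−1)^{m−a}·C(m,a)·C(a−1, a−j)·j!·a^{m−j}·S(ju)·S(u)^j. Equivalently (dividing by the unit S(u)^2), the series A_a(u) := Σ_{j=1}^{a} (j!/a^j)·C(a−1,a−j)·S(ju)·S(u)^{j−2} satisfy the recursion S(mu)·S(u)^{m−2} = (1/m!)·Σ_{a=1}^{m} (−1)^{m−a}·C(m,a)·a^m·A_a(u) for all m ≥ 1. -/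

import Mathlib

open PowerSeries

open Polynomial Finset

lemma fd_lemma (p : Polynomial ℚ) (m : ℕ) (hp : p.degree < ((m + 1 : ℕ) : WithBot ℕ)) :
    (p.comp (Polynomial.X + Polynomial.C 1) - p).degree < (m : WithBot ℕ) := by
  rcases eq_or_ne p 0 with h | h
  · simp [h]
  · have hq : (Polynomial.X + Polynomial.C 1 : Polynomial ℚ).natDegree = 1 := Polynomial.natDegree_X_add_C 1
    have hlc : (p.comp (Polynomial.X + Polynomial.C 1)).leadingCoeff = p.leadingCoeff := by
      rw [Polynomial.leadingCoeff_comp (by rw [hq]; norm_num)]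
      rw [Polynomial.leadingCoeff_X_add_C, one_pow, mul_one]
    have hne : p.comp (Polynomial.X + Polynomial.C 1) ≠ 0 := by
      intro hc
      apply h
      rw [← Polynomial.leadingCoeff_eq_zero, ← hlc, hc, Polynomial.leadingCoeff_zero]
    have hdeg : (p.comp (Polynomial.X + Polynomial.C 1)).degree = p.degree := by
      rw [Polynomial.degree_eq_natDegree hne, Polynomial.degree_eq_natDegree h,
        Polynomial.natDegree_comp, hq, mul_one]
    have h1 := Polynomial.degree_sub_lt hdeg hne hlc
    rw [hdeg] at h1
    have h2 : p.natDegree < m + 1 := (Polynomial.natDegree_lt_iff_degree_lt h).mpr hp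
    calc (p.comp (Polynomial.X + Polynomial.C 1) - p).degree < p.degree := h1
      _ = (p.natDegree : WithBot ℕ) := Polynomial.degree_eq_natDegree h
      _ ≤ (m : WithBot ℕ) := by exact_mod_cast Nat.lt_succ_iff.mp h2

lemma alt_sum_eval_eq_zero (m : ℕ) (p : Polynomial ℚ) (hp : p.degree < (m : WithBot ℕ)) :
    ∑ a ∈ Finset.range (m + 1), (-1 : ℚ) ^ a * (m.choose a) * p.eval (a : ℚ) = 0 := by
  induction m generalizing p with
  | zero =>
    have hp0 : p = 0 := by
      rw [← Polynomial.degree_eq_bot]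
      exact Nat.WithBot.lt_zero_iff.mp (by exact_mod_cast hp)
    simp [hp0]
  | succ m ih =>
    set S : ℚ := ∑ b ∈ Finset.range (m + 1), (-1 : ℚ) ^ b * (m.choose b) * p.eval (b : ℚ) with hS
    -- A = ∑ (-1)^i C(m,i) p(i+1) equals S
    have hA : ∑ i ∈ Finset.range (m + 1), (-1 : ℚ) ^ i * (m.choose i) * p.eval ((i : ℚ) + 1) = S := by
      have h0 := ih (p.comp (Polynomial.X + Polynomial.C 1) - p) (fd_lemma p m (by exact_mod_cast hp))
      have h1 : ∑ i ∈ Finset.range (m + 1), (-1 : ℚ) ^ i * (m.choose i) *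
          (p.eval ((i : ℚ) + 1) - p.eval (i : ℚ)) = 0 := by
        rw [← h0]
        refine Finset.sum_congr rfl fun i _ => ?_
        simp [Polynomial.eval_comp]
      have h2 : (∑ i ∈ Finset.range (m + 1),
          ((-1 : ℚ) ^ i * (m.choose i) * p.eval ((i : ℚ) + 1)
            - (-1 : ℚ) ^ i * (m.choose i) * p.eval (i : ℚ))) = 0 := by
        rw [← h1]; exact Finset.sum_congr rfl fun i _ => by ring
      rw [Finset.sum_sub_distrib] at h2
      exact sub_eq_zero.mp h2
    -- B = ∑ (-1)^(i+1) C(m,i+1) p(i+1) equals S - p(0)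
    have hB : ∑ i ∈ Finset.range (m + 1), (-1 : ℚ) ^ (i + 1) * (m.choose (i + 1)) * p.eval ((i : ℚ) + 1)
        = S - p.eval 0 := by
      have h3 : ∑ b ∈ Finset.range (m + 2), (-1 : ℚ) ^ b * (m.choose b) * p.eval (b : ℚ)
          = ∑ i ∈ Finset.range (m + 1), (-1 : ℚ) ^ (i + 1) * (m.choose (i + 1)) * p.eval ((i : ℚ) + 1)
            + p.eval 0 := by
        rw [Finset.sum_range_succ']
        push_cast
        simp
      have h4 : ∑ b ∈ Finset.range (m + 2), (-1 : ℚ) ^ b * (m.choose b) * p.eval (b : ℚ) = S := by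
        rw [Finset.sum_range_succ, Nat.choose_succ_self]
        simp [hS]
      rw [h4] at h3
      linarith
    -- now the goal
    rw [Finset.sum_range_succ']
    have h5 : ∀ i ∈ Finset.range (m + 1),
        (-1 : ℚ) ^ (i + 1) * ((m + 1).choose (i + 1)) * p.eval ((i + 1 : ℕ) : ℚ)
        = -((-1 : ℚ) ^ i * (m.choose i) * p.eval ((i : ℚ) + 1))
          + (-1 : ℚ) ^ (i + 1) * (m.choose (i + 1)) * p.eval ((i : ℚ) + 1) := by
      intro i _
      rw [Nat.choose_succ_succ]
      push_cast
      ring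
    rw [Finset.sum_congr rfl h5, Finset.sum_add_distrib, Finset.sum_neg_distrib, hA, hB]
    simp only [Nat.choose_zero_right, Nat.cast_zero, Nat.cast_one, pow_zero, one_mul, mul_one]
    ring

lemma key_sum (m j : ℕ) (h1 : 1 ≤ j) (hjm : j ≤ m) :
    ∑ a ∈ Finset.Icc j m,
      (-1 : ℚ) ^ (m - a) * (m.choose a) * ((a - 1).choose (a - j)) * (a : ℚ) ^ (m - j)
    = if j = m then 1 else 0 := by
  rcases eq_or_lt_of_le hjm with rfl | hlt
  · simp
  · rw [if_neg hlt.ne]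
    set p : Polynomial ℚ := (∏ i ∈ Finset.Icc 1 (j - 1), (Polynomial.X - Polynomial.C (i : ℚ))) * Polynomial.X ^ (m - j) with hpdef
    have hdeg : p.degree < (m : WithBot ℕ) := by
      have hnd : p.natDegree ≤ (j - 1) + (m - j) := by
        refine le_trans (Polynomial.natDegree_mul_le) ?_
        gcongr
        · refine le_trans (Polynomial.natDegree_prod_le _ _) ?_
          have : ∀ i ∈ Finset.Icc 1 (j-1), (Polynomial.X - Polynomial.C (i:ℚ)).natDegree = 1 := by
            intro i _; exact Polynomial.natDegree_X_sub_C (i:ℚ)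
          rw [Finset.sum_congr rfl this]
          simp [Nat.card_Icc]
        · exact le_of_eq (Polynomial.natDegree_X_pow _)
      have hlt' : p.natDegree < m := lt_of_le_of_lt hnd (by omega)
      exact lt_of_le_of_lt Polynomial.degree_le_natDegree (by exact_mod_cast hlt')
    have halt := alt_sum_eval_eq_zero m p hdeg
    -- eval formula for a ≥ j
    have heval : ∀ a : ℕ, j ≤ a →
        p.eval (a : ℚ) = ((j - 1).factorial : ℚ) * ((a - 1).choose (j - 1)) * (a : ℚ) ^ (m - j) := by
      intro a ha
      have hprod : ∏ i ∈ Finset.Icc 1 (j - 1), ((a : ℚ) - i)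
          = (((a - 1).descFactorial (j - 1) : ℕ) : ℚ) := by
        rw [Nat.descFactorial_eq_prod_range, Nat.cast_prod]
        refine Finset.prod_nbij' (fun i => i - 1) (fun i => i + 1) ?_ ?_ ?_ ?_ ?_
        · intro x hx; simp only [Finset.mem_Icc] at hx; simp only [Finset.mem_range]; omega
        · intro x hx; simp only [Finset.mem_range] at hx; simp only [Finset.mem_Icc]; omega
        · intro x hx; simp only [Finset.mem_Icc] at hx; show x - 1 + 1 = x; omega
        · intro x _; show x + 1 - 1 = x; omega
        · intro x hx
          simp only [Finset.mem_Icc] at hx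
          have h2 : a - 1 - (x - 1) = a - x := by omega
          rw [h2, Nat.cast_sub (by omega : x ≤ a)]
      simp only [hpdef, Polynomial.eval_mul, Polynomial.eval_prod, Polynomial.eval_sub,
        Polynomial.eval_X, Polynomial.eval_C, Polynomial.eval_pow]
      rw [hprod, Nat.descFactorial_eq_factorial_mul_choose]
      push_cast
      ring
    -- sum over Icc j m equals scaled alternating sum
    have hsign : ∀ a : ℕ, a ≤ m → (-1 : ℚ) ^ (m - a) = (-1) ^ m * (-1) ^ a := by
      intro a ha
      rw [← pow_add]
      have : m + a = (m - a) + 2 * a := by omega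
      rw [this, pow_add, pow_mul]
      norm_num
    have hsub : ∑ a ∈ Finset.Icc j m, (-1 : ℚ) ^ a * (m.choose a) * p.eval (a : ℚ)
        = ∑ a ∈ Finset.range (m + 1), (-1 : ℚ) ^ a * (m.choose a) * p.eval (a : ℚ) := by
      refine Finset.sum_subset ?_ ?_
      · intro a ha
        simp only [Finset.mem_Icc] at ha
        simp only [Finset.mem_range]; omega
      · intro a ha hna
        simp only [Finset.mem_range] at ha
        simp only [Finset.mem_Icc, not_and, not_le] at hna
        have haj : a < j := by omega
        have hz : p.eval (a : ℚ) = 0 := by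
          rcases Nat.eq_zero_or_pos a with rfl | hpos
          · simp only [hpdef, Polynomial.eval_mul, Polynomial.eval_pow, Polynomial.eval_X,
              Nat.cast_zero]
            rw [zero_pow (by omega : m - j ≠ 0), mul_zero]
          · simp only [hpdef, Polynomial.eval_mul]
            rw [Polynomial.eval_prod, Finset.prod_eq_zero (Finset.mem_Icc.mpr ⟨hpos, by omega⟩)]
            · simp
            · simp
        rw [hz, mul_zero]
    have hmain : ∑ a ∈ Finset.Icc j m, (-1 : ℚ) ^ a * (m.choose a) * p.eval (a : ℚ) = 0 := by
      rw [hsub, halt]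
    -- now relate target to hmain
    have hfin : ∑ a ∈ Finset.Icc j m,
        (-1 : ℚ) ^ (m - a) * (m.choose a) * ((a - 1).choose (a - j)) * (a : ℚ) ^ (m - j)
        = ((-1 : ℚ) ^ m / ((j - 1).factorial : ℚ)) *
          ∑ a ∈ Finset.Icc j m, (-1 : ℚ) ^ a * (m.choose a) * p.eval (a : ℚ) := by
      rw [Finset.mul_sum]
      refine Finset.sum_congr rfl fun a ha => ?_
      simp only [Finset.mem_Icc] at ha
      rw [heval a ha.1, hsign a ha.2]
      have hch : (a - 1).choose (a - j) = (a - 1).choose (j - 1) := by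
        have : a - 1 - (j - 1) = a - j := by omega
        rw [← this, Nat.choose_symm (by omega)]
      rw [hch]
      have hfne : (((j - 1).factorial : ℚ)) ≠ 0 := by
        exact_mod_cast Nat.factorial_ne_zero _
      field_simp
    rw [hfin, hmain, mul_zero]

/-- The formal power series `S(u) = Σ_{n≥0} (−1)^n u^{2n} / (4^n (2n+1)!)`,
the Taylor series of `sin(u/2)/(u/2)`. -/
noncomputable def Ssin : PowerSeries ℚ :=
  PowerSeries.mk fun k =>
    if k % 2 = 0 then (-1 : ℚ) ^ (k / 2) / ((4 : ℚ) ^ (k / 2) * (Nat.factorial (2 * (k / 2) + 1)))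
    else 0

/-- The series `A_a(u) = Σ_{j=1}^a (j!/a^j)·C(a−1,a−j)·S(ju)·S(u)^{j−2}`. -/
noncomputable def Aser (a : ℕ) : PowerSeries ℚ :=
  ∑ j ∈ Finset.Icc 1 a,
    (((Nat.factorial j : ℚ) / (a : ℚ) ^ j) * ((a - 1).choose (a - j) : ℚ)) •
      (PowerSeries.rescale (j : ℚ) Ssin * Ssin ^ j * Ssin⁻¹ ^ 2)

/-- `m!·S(mu)·S(u)^m = Σ_{a=1}^m Σ_{j=1}^a (−1)^{m−a} C(m,a) C(a−1,a−j) j! a^{m−j} S(ju) S(u)^j`,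
equivalently the series `A_a(u)` satisfy the localization recursion
`S(mu)·S(u)^{m−2} = (1/m!)·Σ_{a=1}^m (−1)^{m−a}·C(m,a)·a^m·A_a(u)`. -/
theorem hodge_series_recursion (m : ℕ) (hm : 1 ≤ m) :
    ((Nat.factorial m : ℚ) • (PowerSeries.rescale (m : ℚ) Ssin * Ssin ^ m)
      = ∑ a ∈ Finset.Icc 1 m, ∑ j ∈ Finset.Icc 1 a,
          ((-1 : ℚ) ^ (m - a) * (m.choose a : ℚ) * ((a - 1).choose (a - j) : ℚ) *
            (Nat.factorial j : ℚ) * (a : ℚ) ^ (m - j)) •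
            (PowerSeries.rescale (j : ℚ) Ssin * Ssin ^ j)) ∧
    (PowerSeries.rescale (m : ℚ) Ssin * Ssin ^ m * Ssin⁻¹ ^ 2
      = ((1 : ℚ) / (Nat.factorial m : ℚ)) •
          ∑ a ∈ Finset.Icc 1 m,
            ((-1 : ℚ) ^ (m - a) * (m.choose a : ℚ) * (a : ℚ) ^ m) • Aser a) := by
  set P : ℕ → PowerSeries ℚ := fun j => PowerSeries.rescale (j : ℚ) Ssin * Ssin ^ j with hP
  set c : ℕ → ℕ → ℚ := fun a j =>
    (-1 : ℚ) ^ (m - a) * (m.choose a : ℚ) * ((a - 1).choose (a - j) : ℚ) *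
      (Nat.factorial j : ℚ) * (a : ℚ) ^ (m - j) with hc
  have hcoef : ∀ j ∈ Finset.Icc 1 m,
      (∑ a ∈ Finset.Icc j m, c a j) = if j = m then (Nat.factorial m : ℚ) else 0 := by
    intro j hj
    rw [Finset.mem_Icc] at hj
    have hk := key_sum m j hj.1 hj.2
    have : ∑ a ∈ Finset.Icc j m, c a j = (Nat.factorial j : ℚ) *
        ∑ a ∈ Finset.Icc j m,
          (-1 : ℚ) ^ (m - a) * (m.choose a : ℚ) * ((a - 1).choose (a - j) : ℚ) *
            (a : ℚ) ^ (m - j) := by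
      rw [Finset.mul_sum]
      exact Finset.sum_congr rfl fun a _ => by simp only [hc]; ring
    rw [this, hk]
    rcases eq_or_ne j m with rfl | hne
    · simp
    · simp [hne]
  have part1 : (Nat.factorial m : ℚ) • P m
      = ∑ a ∈ Finset.Icc 1 m, ∑ j ∈ Finset.Icc 1 a, c a j • P j := by
    rw [Finset.sum_comm' (s := Finset.Icc 1 m) (t := fun a => Finset.Icc 1 a)
      (t' := Finset.Icc 1 m) (s' := fun j => Finset.Icc j m)
      (by intro a j; simp only [Finset.mem_Icc]; omega)]
    have h1 : ∀ j ∈ Finset.Icc 1 m, ∑ a ∈ Finset.Icc j m, c a j • P j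
        = (if j = m then (Nat.factorial m : ℚ) else 0) • P j := by
      intro j hj
      rw [← Finset.sum_smul, hcoef j hj]
    rw [Finset.sum_congr rfl h1]
    have h2 : ∀ j ∈ Finset.Icc 1 m,
        (if j = m then (Nat.factorial m : ℚ) else 0) • P j
        = if j = m then (Nat.factorial m : ℚ) • P j else 0 := by
      intro j _
      split <;> simp
    rw [Finset.sum_congr rfl h2, Finset.sum_ite_eq' (Finset.Icc 1 m) m
      (fun j => (Nat.factorial m : ℚ) • P j), if_pos (Finset.mem_Icc.mpr ⟨hm, le_refl m⟩)]
  constructor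
  · exact part1
  · -- part 2
    have hfac : ((Nat.factorial m : ℚ)) ≠ 0 := by exact_mod_cast Nat.factorial_ne_zero m
    have hAser : ∀ a ∈ Finset.Icc 1 m,
        ((-1 : ℚ) ^ (m - a) * (m.choose a : ℚ) * (a : ℚ) ^ m) • Aser a
        = ∑ j ∈ Finset.Icc 1 a, c a j • (P j * Ssin⁻¹ ^ 2) := by
      intro a ha
      rw [Finset.mem_Icc] at ha
      rw [Aser, Finset.smul_sum]
      refine Finset.sum_congr rfl fun j hj => ?_
      rw [Finset.mem_Icc] at hj
      rw [smul_smul]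
      congr 1
      have hane : (a : ℚ) ≠ 0 := by exact_mod_cast (by omega : a ≠ 0)
      simp only [hc]
      have hpow : (a : ℚ) ^ (m - j) = (a : ℚ) ^ m / (a : ℚ) ^ j := by
        rw [eq_div_iff (pow_ne_zero j hane), ← pow_add]
        congr 1
        omega
      rw [hpow]
      ring
    rw [Finset.sum_congr rfl hAser]
    have h3 : ∑ a ∈ Finset.Icc 1 m, ∑ j ∈ Finset.Icc 1 a, c a j • (P j * Ssin⁻¹ ^ 2)
        = (∑ a ∈ Finset.Icc 1 m, ∑ j ∈ Finset.Icc 1 a, c a j • P j) * Ssin⁻¹ ^ 2 := by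
      rw [Finset.sum_mul]
      refine Finset.sum_congr rfl fun a _ => ?_
      rw [Finset.sum_mul]
      exact Finset.sum_congr rfl fun j _ => (smul_mul_assoc _ _ _).symm
    rw [h3, ← part1, smul_mul_assoc, smul_smul, one_div, inv_mul_cancel₀ hfac, one_smul]
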